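/- arXiv:1609.08304 — 3 statements merged into one kernel-verified Lean document; each statement's English description precedes it below -/
import Mathlib

section
/- Let (V,C,u) be an order unit space with a strictly convex cone, g : C° → C° a bijective antihomogeneous order-antimorphism, and x ∈ C°. Let G_x : V → V be a linear bijection with G_x(z) = −lim_{t→0} (g(x+tz) − g(x))/t for all z ∈ V, and let S_x = G_x⁻¹ ∘ g : C° → C°. If r, s ∈ ∂C ∖ {0} satisfy r + s = x, then for every t ∈ ℝ one has S_x(e^t r + e^{−t} s) = e^{−t} r + e^t s; that is, S_x reverses the type I geodesic γ(t) = e^t r + e^{−t} s through x. -/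
open Set Filter Topology

variable {V : Type*} [NormedAddCommGroup V] [NormedSpace ℝ V]

/-- `(V, C, u)` is an order unit space whose norm is the order unit norm of `(C, u)`:
`C` is an Archimedean cone and `u` is an order unit of it. -/
structure IsOrderUnitSpace (C : Set V) (u : V) : Prop where
  convex : Convex ℝ C
  smul_mem : ∀ l : ℝ, 0 ≤ l → ∀ x ∈ C, l • x ∈ C
  salient : C ∩ (-C) = {0}
  archimedean : ∀ x : V, ∀ y ∈ C, (∀ n : ℕ, 0 < n → y - (n : ℝ) • x ∈ C) → -x ∈ C
  unit_mem : u ∈ C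
  order_unit : ∀ x : V, ∃ l : ℝ, 0 ≤ l ∧ l • u - x ∈ C
  norm_eq : ∀ x : V, ‖x‖ = sInf {l : ℝ | 0 < l ∧ x + l • u ∈ C ∧ l • u - x ∈ C}

/-- `M(x/y) = inf {β > 0 : x ≤_C β y}`. -/
noncomputable def Mratio (C : Set V) (x y : V) : ℝ :=
  sInf {b : ℝ | 0 < b ∧ b • y - x ∈ C}

/-- The cone `C` is strictly convex: the open segment between any two linearly
independent boundary points lies in the interior. -/
def StrictlyConvexCone (C : Set V) : Prop :=
  ∀ x ∈ frontier C, ∀ y ∈ frontier C, LinearIndependent ℝ ![x, y] →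
    openSegment ℝ x y ⊆ interior C

/-- `g` is antihomogeneous on the interior of `C`: `g (λ x) = λ⁻¹ g x`. -/
def IsAntihomogeneous (C : Set V) (g : V → V) : Prop :=
  ∀ l : ℝ, 0 < l → ∀ x ∈ interior C, g (l • x) = l⁻¹ • g x

/-- `g` is an order-antimorphism of the interior of `C`: `x ≤_C y ↔ g y ≤_C g x`. -/
def IsOrderAntimorphism (C : Set V) (g : V → V) : Prop :=
  ∀ x ∈ interior C, ∀ y ∈ interior C, (y - x ∈ C ↔ g x - g y ∈ C)

/-- A state of `(V, C, u)`: a positive linear functional with `φ u = 1`. -/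
def IsState (C : Set V) (u : V) (φ : V →ₗ[ℝ] ℝ) : Prop :=
  (∀ x ∈ C, 0 ≤ φ x) ∧ φ u = 1


namespace IsOrderUnitSpace

variable {C : Set V} {u : V} (h : IsOrderUnitSpace C u)
include h

theorem zero_mem : (0:V) ∈ C := by
  simpa using h.smul_mem 0 le_rfl u h.unit_mem

theorem add_mem {a b : V} (ha : a ∈ C) (hb : b ∈ C) : a + b ∈ C := by
  have h2 := h.convex ha hb (by norm_num : (0:ℝ) ≤ 1/2) (by norm_num : (0:ℝ) ≤ 1/2)
    (by norm_num)
  have h3 := h.smul_mem 2 (by norm_num) _ h2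
  have : (2:ℝ) • ((1/2 : ℝ) • a + (1/2 : ℝ) • b) = a + b := by module
  rwa [this] at h3

theorem mem_of_forall_add (w : V) (hw : ∀ l : ℝ, 0 < l → w + l • u ∈ C) : w ∈ C := by
  have h1 := h.archimedean (-w) u h.unit_mem ?_
  · simpa using h1
  · intro n hn
    have hpos : (0:ℝ) < n := by exact_mod_cast hn
    have h2 := h.smul_mem n (le_of_lt hpos) _ (hw ((n:ℝ)⁻¹) (by positivity))
    have : (n:ℝ) • (w + (n:ℝ)⁻¹ • u) = u - (n:ℝ) • (-w) := by
      rw [smul_add, smul_smul, mul_inv_cancel₀ (ne_of_gt hpos)]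
      module
    rwa [this] at h2

theorem add_smul_unit_mem {w : V} {l : ℝ} (hl : ‖w‖ < l) : w + l • u ∈ C := by
  have hS : {m : ℝ | 0 < m ∧ w + m • u ∈ C ∧ m • u - w ∈ C}.Nonempty := by
    obtain ⟨l1, hl1, hl1'⟩ := h.order_unit w
    obtain ⟨l2, hl2, hl2'⟩ := h.order_unit (-w)
    refine ⟨l1 + l2 + 1, by positivity, ?_, ?_⟩
    · have : (l1 + l2 + 1) • u + w = ((l2 • u) - -w) + (l1 + 1) • u := by module
      rw [add_comm w]
      rw [this]
      exact h.add_mem hl2' (h.smul_mem _ (by linarith) _ h.unit_mem)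
    · have : (l1 + l2 + 1) • u - w = ((l1 • u) - w) + (l2 + 1) • u := by module
      rw [this]
      exact h.add_mem hl1' (h.smul_mem _ (by linarith) _ h.unit_mem)
  have hbdd : BddBelow {m : ℝ | 0 < m ∧ w + m • u ∈ C ∧ m • u - w ∈ C} :=
    ⟨0, fun m hm => le_of_lt hm.1⟩
  have hlt : sInf {m : ℝ | 0 < m ∧ w + m • u ∈ C ∧ m • u - w ∈ C} < l := by
    rw [← h.norm_eq w]; exact hl
  obtain ⟨m, hm, hml⟩ := (csInf_lt_iff hbdd hS).mp hlt
  have : w + l • u = (w + m • u) + (l - m) • u := by module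
  rw [this]
  exact h.add_mem hm.2.1 (h.smul_mem _ (by linarith) _ h.unit_mem)

theorem isClosed : IsClosed C := by
  refine isClosed_of_closure_subset ?_
  intro w hw
  refine h.mem_of_forall_add w ?_
  intro l hl
  obtain ⟨z, hz, hdz⟩ := Metric.mem_closure_iff.mp hw l hl
  have hn : ‖w - z‖ < l := by rwa [← dist_eq_norm]
  have h2 := h.add_smul_unit_mem hn
  have : w + l • u = z + ((w - z) + l • u) := by module
  rw [this]
  exact h.add_mem hz h2

theorem frontier_eq : frontier C = C \ interior C := h.isClosed.frontier_eq

theorem frontier_subset : frontier C ⊆ C := by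
  rw [h.frontier_eq]; exact diff_subset

theorem add_interior {p c : V} (hp : p ∈ interior C) (hc : c ∈ C) : p + c ∈ interior C := by
  have hT : IsOpen {y : V | y - c ∈ interior C} :=
    isOpen_interior.preimage (continuous_id.sub continuous_const)
  have hTC : {y : V | y - c ∈ interior C} ⊆ C := by
    intro y hy
    have : y = (y - c) + c := by abel
    rw [this]
    exact h.add_mem (interior_subset hy) hc
  have : p + c ∈ {y : V | y - c ∈ interior C} := by simp [hp]
  exact interior_maximal hTC hT this

theorem smul_interior {l : ℝ} (hl : 0 < l) {p : V} (hp : p ∈ interior C) :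
    l • p ∈ interior C := by
  have hT : IsOpen {y : V | l⁻¹ • y ∈ interior C} :=
    isOpen_interior.preimage (continuous_const_smul _)
  have hTC : {y : V | l⁻¹ • y ∈ interior C} ⊆ C := by
    intro y hy
    have : y = l • (l⁻¹ • y) := by
      rw [smul_smul, mul_inv_cancel₀ (ne_of_gt hl), one_smul]
    rw [this]
    exact h.smul_mem _ (le_of_lt hl) _ (interior_subset hy)
  have : l • p ∈ {y : V | l⁻¹ • y ∈ interior C} := by
    simp only [mem_setOf_eq, smul_smul, inv_mul_cancel₀ (ne_of_gt hl), one_smul]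
    exact hp
  exact interior_maximal hTC hT this

theorem smul_frontier {l : ℝ} (hl : 0 < l) {p : V} (hp : p ∈ frontier C) :
    l • p ∈ frontier C := by
  rw [h.frontier_eq] at hp ⊢
  refine ⟨h.smul_mem _ (le_of_lt hl) _ hp.1, fun hint => hp.2 ?_⟩
  have := h.smul_interior (inv_pos.mpr hl) hint
  rwa [smul_smul, inv_mul_cancel₀ (ne_of_gt hl), one_smul] at this

theorem interior_notin_frontier {w : V} (hw : w ∈ interior C) : w ∉ frontier C := by
  rw [h.frontier_eq]
  exact fun hf => hf.2 hw

end IsOrderUnitSpace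

namespace IsOrderUnitSpace

variable {C : Set V} {u : V} (h : IsOrderUnitSpace C u)
include h

/-- a nonzero element of `C` whose negative lies in `C` is impossible -/
theorem eq_zero_of_mem_neg {v : V} (hv : v ∈ C) (hv' : -v ∈ C) : v = 0 := by
  have : v ∈ C ∩ (-C) := ⟨hv, by rwa [Set.mem_neg]⟩
  rwa [h.salient, Set.mem_singleton_iff] at this

/-- extreme-ray lemma: in a strictly convex cone, if a frontier point is the sum of
two nonzero cone elements, they are positively proportional. -/
theorem par (hsc : StrictlyConvexCone C) {v₁ v₂ : V}
    (h1 : v₁ ∈ C) (h10 : v₁ ≠ 0) (h2 : v₂ ∈ C) (h20 : v₂ ≠ 0)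
    (hf : v₁ + v₂ ∈ frontier C) : ∃ μ : ℝ, 0 < μ ∧ v₂ = μ • v₁ := by
  have hfr1 : v₁ ∈ frontier C := by
    rw [h.frontier_eq]
    refine ⟨h1, fun hint => ?_⟩
    exact (h.interior_notin_frontier (h.add_interior hint h2)) hf
  have hfr2 : v₂ ∈ frontier C := by
    rw [h.frontier_eq]
    refine ⟨h2, fun hint => ?_⟩
    have := h.add_interior hint h1
    rw [add_comm] at this
    exact (h.interior_notin_frontier this) hf
  have hdep : ∃ c : ℝ, v₂ = c • v₁ := by
    by_contra hc
    push_neg at hc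
    have hli : LinearIndependent ℝ ![v₁, v₂] := by
      rw [linearIndependent_fin2]
      simp only [Matrix.cons_val_one, Matrix.head_cons, Matrix.cons_val_zero]
      refine ⟨h20, fun a ha => ?_⟩
      rcases eq_or_ne a 0 with rfl | ha0
      · rw [zero_smul] at ha; exact h10 ha.symm
      · exact hc a⁻¹ (by rw [← ha, smul_smul, inv_mul_cancel₀ ha0, one_smul])
    have hmid : (1/2 : ℝ) • v₁ + (1/2 : ℝ) • v₂ ∈ openSegment ℝ v₁ v₂ :=
      ⟨1/2, 1/2, by norm_num, by norm_num, by norm_num, rfl⟩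
    have hint := hsc v₁ hfr1 v₂ hfr2 hli hmid
    have h4 := h.smul_interior (by norm_num : (0:ℝ) < 2) hint
    have : (2:ℝ) • ((1/2 : ℝ) • v₁ + (1/2 : ℝ) • v₂) = v₁ + v₂ := by module
    rw [this] at h4
    exact (h.interior_notin_frontier h4) hf
  obtain ⟨c, hc⟩ := hdep
  refine ⟨c, ?_, hc⟩
  rcases lt_trichotomy c 0 with hneg | rfl | hpos
  · exfalso
    have : -v₂ ∈ C := by
      rw [hc, ← neg_smul]
      exact h.smul_mem _ (by linarith) _ h1
    exact h20 (h.eq_zero_of_mem_neg h2 this)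
  · exfalso; rw [zero_smul] at hc; exact h20 hc
  · exact hpos


/-- no scalar relation between the two boundary summands of an interior point -/
theorem no_rel {p q : V} (hp : p ∈ frontier C) (hp0 : p ≠ 0)
    (hq : q ∈ frontier C) (hq0 : q ≠ 0) (hpq : p + q ∈ interior C) :
    ∀ a : ℝ, p ≠ a • q := by
  intro a hpa
  rcases lt_trichotomy a 0 with hneg | rfl | hpos
  · have : -p ∈ C := by
      rw [hpa, ← neg_smul]
      exact h.smul_mem _ (by linarith) _ (h.frontier_subset hq)
    exact hp0 (h.eq_zero_of_mem_neg (h.frontier_subset hp) this)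
  · rw [zero_smul] at hpa; exact hp0 hpa
  · have hfr : (1 + a) • q ∈ frontier C := h.smul_frontier (by linarith) hq
    have : (1 + a) • q = p + q := by rw [hpa]; module
    rw [this] at hfr
    exact h.interior_notin_frontier hpq hfr

theorem coeff_nonneg_left (hsc : StrictlyConvexCone C) {p q : V}
    (hp : p ∈ frontier C) (hq : q ∈ frontier C)
    (hpq : ∀ a : ℝ, p ≠ a • q) (hqp : ∀ a : ℝ, q ≠ a • p)
    {α β : ℝ} (hmem : α • p + β • q ∈ C) : 0 ≤ α := by
  by_contra hα
  push_neg at hα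
  have hp0 : p ≠ 0 := fun h0 => hpq 0 (by rw [h0, zero_smul])
  have hq0 : q ≠ 0 := fun h0 => hqp 0 (by rw [h0, zero_smul])
  have hα0 : α ≠ 0 := ne_of_lt hα
  have hv0 : α • p + β • q ≠ 0 := by
    intro h0
    have h1 : α • p = -(β • q) := by
      rw [← sub_eq_zero, ← h0]; module
    have : p = (α⁻¹ * (-β)) • q := by
      calc p = α⁻¹ • (α • p) := by rw [smul_smul, inv_mul_cancel₀ hα0, one_smul]
        _ = α⁻¹ • (-(β • q)) := by rw [h1]
        _ = (α⁻¹ * (-β)) • q := by module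
    exact hpq _ this
  rcases le_or_gt β 0 with hβ | hβ
  · have hnegmem : -(α • p + β • q) ∈ C := by
      have : -(α • p + β • q) = (-α) • p + (-β) • q := by module
      rw [this]
      exact h.add_mem (h.smul_mem _ (by linarith) _ (h.frontier_subset hp))
        (h.smul_mem _ (by linarith) _ (h.frontier_subset hq))
    exact hv0 (h.eq_zero_of_mem_neg hmem hnegmem)
  · have hfr : β • q ∈ frontier C := h.smul_frontier hβ hq
    have hdecomp : (α • p + β • q) + (-α) • p = β • q := by module
    have hpar := h.par hsc hmem hv0
      (h.smul_mem (-α) (by linarith) _ (h.frontier_subset hp))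
      (smul_ne_zero (by intro h0; linarith [neg_eq_zero.mp h0]) hp0)
      (by rw [hdecomp]; exact hfr)
    obtain ⟨μ, hμ, hrel⟩ := hpar
    -- (-α) • p = μ • (α • p + β • q)  hence  β • q = ((-α) * (1 + μ) / μ) • p
    have hμ0 : μ ≠ 0 := ne_of_gt hμ
    have h1 : μ • (α • p + β • q) = (-α) • p := hrel.symm
    have h2 : (μ * β) • q = (-α - μ * α) • p := by
      rw [← sub_eq_zero]
      have expand : (μ * β) • q - (-α - μ * α) • p
          = μ • (α • p + β • q) - (-α) • p := by module
      rw [expand, h1, sub_self]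
    have h3 : q = ((μ * β)⁻¹ * (-α - μ * α)) • p := by
      have hmb : μ * β ≠ 0 := mul_ne_zero hμ0 (ne_of_gt hβ)
      calc q = (μ * β)⁻¹ • ((μ * β) • q) := by
              rw [smul_smul, inv_mul_cancel₀ hmb, one_smul]
        _ = (μ * β)⁻¹ • ((-α - μ * α) • p) := by rw [h2]
        _ = ((μ * β)⁻¹ * (-α - μ * α)) • p := by rw [smul_smul]
    exact hqp _ h3

theorem coeff_iff (hsc : StrictlyConvexCone C) {p q : V}
    (hp : p ∈ frontier C) (hq : q ∈ frontier C)
    (hpq : ∀ a : ℝ, p ≠ a • q) (hqp : ∀ a : ℝ, q ≠ a • p)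
    (α β : ℝ) : α • p + β • q ∈ C ↔ 0 ≤ α ∧ 0 ≤ β := by
  constructor
  · intro hmem
    refine ⟨h.coeff_nonneg_left hsc hp hq hpq hqp hmem, ?_⟩
    rw [add_comm] at hmem
    exact h.coeff_nonneg_left hsc hq hp hqp hpq hmem
  · rintro ⟨hα, hβ⟩
    exact h.add_mem (h.smul_mem _ hα _ (h.frontier_subset hp))
      (h.smul_mem _ hβ _ (h.frontier_subset hq))


/-- optimality of the threshold puts the extremal vector on the frontier -/
theorem opt_frontier {p q : V} {l₀ : ℝ} (hl₀ : 0 < l₀)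
    (hiff : ∀ l : ℝ, 0 < l → (l • p - q ∈ C ↔ l₀ ≤ l)) :
    l₀ • p - q ∈ frontier C := by
  rw [h.frontier_eq]
  refine ⟨(hiff l₀ hl₀).mpr le_rfl, fun hint => ?_⟩
  have hcont : Continuous fun l : ℝ => l • p - q :=
    (continuous_id.smul continuous_const).sub continuous_const
  have hev : ∀ᶠ l in 𝓝 l₀, l • p - q ∈ interior C :=
    hcont.continuousAt (isOpen_interior.mem_nhds hint)
  have hev2 : ∀ᶠ l in 𝓝 l₀, 0 < l :=
    eventually_nhds_iff.mpr ⟨Set.Ioi 0, fun y hy => hy, isOpen_Ioi, hl₀⟩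
  have hev3 : ∀ᶠ l in 𝓝[<] l₀, (l • p - q ∈ interior C ∧ 0 < l) ∧ l < l₀ := by
    have h1 : ∀ᶠ l in 𝓝[<] l₀, l • p - q ∈ interior C ∧ 0 < l :=
      (hev.and hev2).filter_mono nhdsWithin_le_nhds
    exact h1.and eventually_mem_nhdsWithin
  obtain ⟨l, ⟨⟨hli, hlp⟩, hll⟩⟩ := hev3.exists
  have := (hiff l hlp).mp (interior_subset hli)
  linarith

end IsOrderUnitSpace

set_option maxHeartbeats 1000000 in
/-- **Lemma** (geodesic reversal). The symmetry `S_x = G_x⁻¹ ∘ g` reverses every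
type I geodesic `t ↦ e^t r + e^{−t} s` (with `r, s ∈ ∂C ∖ {0}`, `r + s = x`)
through `x`. -/
theorem symmetry_reverses_typeI_geodesics
    (C : Set V) (u : V) (hous : IsOrderUnitSpace C u) (hsc : StrictlyConvexCone C)
    (g : V → V) (hbij : Set.BijOn g (interior C) (interior C))
    (hanti : IsAntihomogeneous C g) (hmor : IsOrderAntimorphism C g)
    (x : V) (hx : x ∈ interior C)
    (G : V ≃ₗ[ℝ] V)
    (hG : ∀ z : V, Tendsto (fun t : ℝ => t⁻¹ • (g (x + t • z) - g x))
      (𝓝[≠] (0:ℝ)) (𝓝 (-(G z))))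
    (r s : V) (hr : r ∈ frontier C) (hr0 : r ≠ 0)
    (hs : s ∈ frontier C) (hs0 : s ≠ 0) (hrs : r + s = x) :
    ∀ t : ℝ, G.symm (g (Real.exp t • r + Real.exp (-t) • s)) =
      Real.exp (-t) • r + Real.exp t • s := by
  have hrC : r ∈ C := hous.frontier_subset hr
  have hsC : s ∈ C := hous.frontier_subset hs
  have hxint : (r + s) ∈ interior C := by rwa [hrs]
  have hrs_ind : ∀ a : ℝ, r ≠ a • s := hous.no_rel hr hr0 hs hs0 hxint
  have hsr_ind : ∀ a : ℝ, s ≠ a • r := hous.no_rel hs hs0 hr hr0 (by rwa [add_comm])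
  have hcoeff : ∀ α β : ℝ, α • r + β • s ∈ C ↔ 0 ≤ α ∧ 0 ≤ β := fun α β =>
    hous.coeff_iff hsc hr hs hrs_ind hsr_ind α β
  set f : ℝ → V := fun β => g (r + β • s) with hfdef
  set w : V := g x with hwdef
  have hw_int : w ∈ interior C := hbij.mapsTo hx
  have hcurve : ∀ β : ℝ, 0 < β → r + β • s ∈ interior C := by
    intro β hβ
    rcases le_or_gt β 1 with hβ1 | hβ1
    · have h1 : β • x ∈ interior C := hous.smul_interior hβ hx
      have h2 := hous.add_interior h1 (hous.smul_mem (1 - β) (by linarith) _ hrC)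
      have h3 : β • x + (1 - β) • r = r + β • s := by rw [← hrs]; module
      rwa [h3] at h2
    · have h2 := hous.add_interior hx (hous.smul_mem (β - 1) (by linarith) _ hsC)
      have h3 : x + (β - 1) • s = r + β • s := by rw [← hrs]; module
      rwa [h3] at h2
  have hfint : ∀ β : ℝ, 0 < β → f β ∈ interior C := fun β hβ => hbij.mapsTo (hcurve β hβ)
  have hf1 : f 1 = w := by
    simp only [hfdef]
    rw [one_smul, hrs]
  have hstar : ∀ β β' l : ℝ, 0 < β → 0 < β' → 0 < l →
      (l • f β - f β' ∈ C ↔ 1 ≤ l ∧ β ≤ l * β') := by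
    intro β β' l hβ hβ' hl
    have h1 : g (l⁻¹ • (r + β • s)) = l • f β := by
      rw [hanti l⁻¹ (inv_pos.mpr hl) _ (hcurve β hβ), inv_inv]
    have h1' : g (r + β' • s) = f β' := rfl
    have h2 := hmor (l⁻¹ • (r + β • s)) (hous.smul_interior (inv_pos.mpr hl) (hcurve β hβ))
      (r + β' • s) (hcurve β' hβ')
    rw [h1, h1'] at h2
    have h3 : r + β' • s - l⁻¹ • (r + β • s) = (1 - l⁻¹) • r + (β' - l⁻¹ * β) • s := by
      module
    rw [h3, hcoeff] at h2
    rw [← h2]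
    have hll : l * l⁻¹ = 1 := mul_inv_cancel₀ (ne_of_gt hl)
    have hli : 0 < l⁻¹ := inv_pos.mpr hl
    constructor
    · rintro ⟨h4, h5⟩
      constructor
      · nlinarith
      · nlinarith
    · rintro ⟨h4, h5⟩
      constructor
      · nlinarith
      · nlinarith
  have hfne : ∀ β β' : ℝ, 0 < β → 0 < β' → β < β' → f β ≠ f β' := by
    intro β β' hβ hβ' hlt heq
    have h1 : (1:ℝ) • f β' - f β ∈ C := by
      rw [one_smul, heq, sub_self]; exact hous.zero_mem
    have h2 := (hstar β' β 1 hβ' hβ one_pos).mp h1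
    linarith [h2.2]
  -- extremal vectors
  set Bb : ℝ → V := fun β => (β⁻¹ - 1)⁻¹ • (f β - w) with hBbdef
  have hsign : ∀ β : ℝ, 0 < β → 1 < β → β⁻¹ - 1 < 0 := by
    intro β hβ hβ1
    have h1 : 0 < β⁻¹ := inv_pos.mpr hβ
    have h2 : β * β⁻¹ = 1 := mul_inv_cancel₀ (ne_of_gt hβ)
    nlinarith
  have hsign' : ∀ β : ℝ, 0 < β → β < 1 → 0 < β⁻¹ - 1 := by
    intro β hβ hβ1
    have h1 : 0 < β⁻¹ := inv_pos.mpr hβ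
    have h2 : β * β⁻¹ = 1 := mul_inv_cancel₀ (ne_of_gt hβ)
    nlinarith
  have hinvne : ∀ β : ℝ, 0 < β → β ≠ 1 → β⁻¹ - 1 ≠ 0 := by
    intro β hβ hβ1
    rcases lt_or_gt_of_ne hβ1 with hh | hh
    · exact ne_of_gt (hsign' β hβ hh)
    · exact ne_of_lt (hsign β hβ hh)
  have hFB : ∀ β : ℝ, 0 < β → β ≠ 1 → f β - w = (β⁻¹ - 1) • Bb β := by
    intro β hβ hβ1
    have h2 : Bb β = (β⁻¹ - 1)⁻¹ • (f β - w) := rfl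
    rw [h2, smul_smul, mul_inv_cancel₀ (hinvne β hβ hβ1), one_smul]
  have hfnew : ∀ β : ℝ, 0 < β → β ≠ 1 → f β ≠ w := by
    intro β hβ hβ1
    rcases lt_or_gt_of_ne hβ1 with hh | hh
    · rw [← hf1]; exact hfne β 1 hβ one_pos hh
    · rw [← hf1]; exact (hfne 1 β one_pos hβ hh).symm
  have hBbne : ∀ β : ℝ, 0 < β → β ≠ 1 → Bb β ≠ 0 := by
    intro β hβ hβ1
    have h2 : Bb β = (β⁻¹ - 1)⁻¹ • (f β - w) := rfl
    rw [h2]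
    exact smul_ne_zero (inv_ne_zero (hinvne β hβ hβ1)) (sub_ne_zero.mpr (hfnew β hβ hβ1))
  have hBbfr : ∀ β : ℝ, 0 < β → β ≠ 1 → Bb β ∈ frontier C := by
    intro β hβ hβ1
    rcases lt_or_gt_of_ne hβ1 with hlt | hgt
    · have hopt : ∀ l : ℝ, 0 < l → (l • f β - w ∈ C ↔ 1 ≤ l) := by
        intro l hl
        rw [← hf1, hstar β 1 l hβ one_pos hl]
        exact ⟨fun hh => hh.1, fun hh => ⟨hh, by nlinarith⟩⟩
      have h1 := hous.opt_frontier one_pos hopt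
      rw [one_smul] at h1
      have h2 : Bb β = (β⁻¹ - 1)⁻¹ • (f β - w) := rfl
      rw [h2]
      exact hous.smul_frontier (inv_pos.mpr (hsign' β hβ hlt)) h1
    · have hopt : ∀ l : ℝ, 0 < l → (l • w - f β ∈ C ↔ 1 ≤ l) := by
        intro l hl
        rw [← hf1, hstar 1 β l one_pos hβ hl]
        exact ⟨fun hh => hh.1, fun hh => ⟨hh, by nlinarith⟩⟩
      have h1 := hous.opt_frontier one_pos hopt
      rw [one_smul] at h1
      have h2 : Bb β = (1 - β⁻¹)⁻¹ • (w - f β) := by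
        have h3 : Bb β = (β⁻¹ - 1)⁻¹ • (f β - w) := rfl
        rw [h3, show w - f β = -(f β - w) from by abel, smul_neg, ← neg_smul, neg_inv,
          neg_sub]
      rw [h2]
      have h4 : 0 < (1 - β⁻¹) := by have := hsign β hβ hgt; linarith
      exact hous.smul_frontier (inv_pos.mpr h4) h1
  have hWBfr : ∀ β : ℝ, 0 < β → β ≠ 1 → w - Bb β ∈ frontier C := by
    intro β hβ hβ1
    have hβ0 : β ≠ 0 := ne_of_gt hβ
    have hβ10 : β - 1 ≠ 0 := sub_ne_zero.mpr hβ1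
    have hinv0 : β⁻¹ - 1 ≠ 0 := hinvne β hβ hβ1
    rcases lt_or_gt_of_ne hβ1 with hlt | hgt
    · -- β < 1 : use β⁻¹ • w - f β
      have hipos : 0 < β⁻¹ := inv_pos.mpr hβ
      have hmul : β * β⁻¹ = 1 := mul_inv_cancel₀ hβ0
      have hopt : ∀ l : ℝ, 0 < l → (l • w - f β ∈ C ↔ β⁻¹ ≤ l) := by
        intro l hl
        rw [← hf1, hstar 1 β l one_pos hβ hl]
        constructor
        · rintro ⟨h4, h5⟩; nlinarith
        · intro h4
          have h6 : 1 < β⁻¹ := by nlinarith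
          exact ⟨by linarith, by nlinarith⟩
      have h1 := hous.opt_frontier hipos hopt
      have h2 : w - Bb β = (β⁻¹ - 1)⁻¹ • (β⁻¹ • w - f β) := by
        have h4 : (β⁻¹ - 1) • (w - Bb β) = β⁻¹ • w - f β := by
          rw [smul_sub, ← hFB β hβ hβ1]
          module
        rw [← h4, smul_smul, inv_mul_cancel₀ hinv0, one_smul]
      rw [h2]
      exact hous.smul_frontier (inv_pos.mpr (hsign' β hβ hlt)) h1
    · -- β > 1 : use β • f β - w
      have hopt : ∀ l : ℝ, 0 < l → (l • f β - w ∈ C ↔ β ≤ l) := by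
        intro l hl
        rw [← hf1, hstar β 1 l hβ one_pos hl]
        constructor
        · rintro ⟨h4, h5⟩; nlinarith
        · intro h4; exact ⟨by linarith, by nlinarith⟩
      have h1 := hous.opt_frontier hβ hopt
      have h2 : w - Bb β = (β - 1)⁻¹ • (β • f β - w) := by
        have hb1 : (β - 1) • Bb β = (-β) • (f β - w) := by
          have h3 : Bb β = (β⁻¹ - 1)⁻¹ • (f β - w) := rfl
          rw [h3, smul_smul]
          congr 1
          have hb2 : (β - 1) = (-β) * (β⁻¹ - 1) := by
            field_simp
            ring
          rw [hb2, mul_assoc, mul_inv_cancel₀ hinv0, mul_one]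
        have h4 : (β - 1) • (w - Bb β) = β • f β - w := by
          rw [smul_sub, hb1]
          module
        rw [← h4, smul_smul, inv_mul_cancel₀ hβ10, one_smul]
      rw [h2]
      exact hous.smul_frontier (inv_pos.mpr (by linarith)) h1
  have hWBne : ∀ β : ℝ, 0 < β → β ≠ 1 → w - Bb β ≠ 0 := by
    intro β hβ hβ1 h0
    have h1 : w = Bb β := by rwa [sub_eq_zero] at h0
    exact hous.interior_notin_frontier hw_int (h1 ▸ hBbfr β hβ hβ1)
  -- pairwise proportionality
  have hc_par : ∀ β β' : ℝ, 0 < β → β ≠ 1 → 0 < β' → β' ≠ 1 → β < β' →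
      ∃ c : ℝ, 0 < c ∧ Bb β' = c • Bb β := by
    intro β β' hβ hβ1 hβ' hβ'1 hlt
    have hBB' : Bb β' = (β'⁻¹ - 1)⁻¹ • (f β' - w) := rfl
    have hv2C : f β - f β' ∈ C := by
      have h4 := (hstar β β' 1 hβ hβ' one_pos).mpr ⟨le_rfl, by rw [one_mul]; linarith⟩
      rwa [one_smul] at h4
    have hv2ne : f β - f β' ≠ 0 := sub_ne_zero.mpr (hfne β β' hβ hβ' hlt)
    rcases lt_or_gt_of_ne hβ1 with hβlt | hβgt
    · rcases lt_or_gt_of_ne hβ'1 with hβ'lt | hβ'gt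
      · -- case B : β < β' < 1
        have hv1C : f β' - w ∈ C := by
          have h4 := (hstar β' 1 1 hβ' one_pos one_pos).mpr ⟨le_rfl, by rw [one_mul]; linarith⟩
          rwa [one_smul, hf1] at h4
        have hv1ne : f β' - w ≠ 0 := sub_ne_zero.mpr (hfnew β' hβ' hβ'1)
        have hsumfr : (f β' - w) + (f β - f β') ∈ frontier C := by
          have hopt : ∀ l : ℝ, 0 < l → (l • f β - w ∈ C ↔ 1 ≤ l) := by
            intro l hl
            rw [← hf1, hstar β 1 l hβ one_pos hl]
            exact ⟨fun hh => hh.1, fun hh => ⟨hh, by nlinarith⟩⟩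
          have h1 := hous.opt_frontier one_pos hopt
          rw [one_smul] at h1
          have h2 : (f β' - w) + (f β - f β') = f β - w := by abel
          rwa [h2]
        obtain ⟨μ, hμ, hμrel⟩ := hous.par hsc hv1C hv1ne hv2C hv2ne hsumfr
        refine ⟨(β'⁻¹ - 1)⁻¹ * ((1 + μ)⁻¹ * (β⁻¹ - 1)), ?_, ?_⟩
        · have h1 := hsign' β hβ hβlt
          have h2 := hsign' β' hβ' hβ'lt
          have h3 : (0:ℝ) < (1 + μ)⁻¹ := by positivity
          exact mul_pos (inv_pos.mpr h2) (mul_pos h3 h1)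
        · have h6 : (1 + μ) • (f β' - w) = f β - w := by
            linear_combination (norm := module) -hμrel
          have h8 : f β' - w = (1 + μ)⁻¹ • (f β - w) := by
            rw [← h6, smul_smul, inv_mul_cancel₀ (by positivity), one_smul]
          rw [hBB', h8, hFB β hβ hβ1, smul_smul, smul_smul, mul_assoc]
      · -- case C : β < 1 < β'
        have hv1C : f β - w ∈ C := by
          have h4 := (hstar β 1 1 hβ one_pos one_pos).mpr ⟨le_rfl, by rw [one_mul]; linarith⟩
          rwa [one_smul, hf1] at h4
        have hv1ne : f β - w ≠ 0 := sub_ne_zero.mpr (hfnew β hβ hβ1)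
        have hv2C' : w - f β' ∈ C := by
          have h4 := (hstar 1 β' 1 one_pos hβ' one_pos).mpr ⟨le_rfl, by rw [one_mul]; linarith⟩
          rwa [one_smul, hf1] at h4
        have hv2ne' : w - f β' ≠ 0 := sub_ne_zero.mpr (Ne.symm (hfnew β' hβ' hβ'1))
        have hsumfr : (f β - w) + (w - f β') ∈ frontier C := by
          have hopt : ∀ l : ℝ, 0 < l → (l • f β - f β' ∈ C ↔ 1 ≤ l) := by
            intro l hl
            rw [hstar β β' l hβ hβ' hl]
            exact ⟨fun hh => hh.1, fun hh => ⟨hh, by nlinarith⟩⟩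
          have h1 := hous.opt_frontier one_pos hopt
          rw [one_smul] at h1
          have h2 : (f β - w) + (w - f β') = f β - f β' := by abel
          rwa [h2]
        obtain ⟨μ, hμ, hμrel⟩ := hous.par hsc hv1C hv1ne hv2C' hv2ne' hsumfr
        refine ⟨(β'⁻¹ - 1)⁻¹ * ((-μ) * (β⁻¹ - 1)), ?_, ?_⟩
        · have h1 := hsign' β hβ hβlt
          have h2 := hsign β' hβ' hβ'gt
          exact mul_pos_of_neg_of_neg (inv_lt_zero.mpr h2)
            (mul_neg_of_neg_of_pos (by linarith) h1)
        · have h6 : f β' - w = (-μ) • (f β - w) := by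
            linear_combination (norm := module) -hμrel
          rw [hBB', h6, hFB β hβ hβ1, smul_smul, smul_smul, mul_assoc]
    · -- case A : 1 < β < β'
      have hβ'gt : 1 < β' := lt_trans hβgt hlt
      have hv1C : w - f β ∈ C := by
        have h4 := (hstar 1 β 1 one_pos hβ one_pos).mpr ⟨le_rfl, by rw [one_mul]; linarith⟩
        rwa [one_smul, hf1] at h4
      have hv1ne : w - f β ≠ 0 := sub_ne_zero.mpr (Ne.symm (hfnew β hβ hβ1))
      have hsumfr : (w - f β) + (f β - f β') ∈ frontier C := by
        have hopt : ∀ l : ℝ, 0 < l → (l • w - f β' ∈ C ↔ 1 ≤ l) := by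
          intro l hl
          rw [← hf1, hstar 1 β' l one_pos hβ' hl]
          exact ⟨fun hh => hh.1, fun hh => ⟨hh, by nlinarith⟩⟩
        have h1 := hous.opt_frontier one_pos hopt
        rw [one_smul] at h1
        have h2 : (w - f β) + (f β - f β') = w - f β' := by abel
        rwa [h2]
      obtain ⟨μ, hμ, hμrel⟩ := hous.par hsc hv1C hv1ne hv2C hv2ne hsumfr
      refine ⟨(β'⁻¹ - 1)⁻¹ * ((1 + μ) * (β⁻¹ - 1)), ?_, ?_⟩
      · have h1 := hsign β hβ hβgt
        have h2 := hsign β' hβ' hβ'gt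
        exact mul_pos_of_neg_of_neg (inv_lt_zero.mpr h2)
          (mul_neg_of_pos_of_neg (by linarith) h1)
      · have h6 : f β' - w = (1 + μ) • (f β - w) := by
          linear_combination (norm := module) -hμrel
        rw [hBB', h6, hFB β hβ hβ1, smul_smul, smul_smul, mul_assoc]
  -- the proportionality constant is 1
  have hc_one : ∀ β β' : ℝ, 0 < β → β ≠ 1 → 0 < β' → β' ≠ 1 →
      ∀ c : ℝ, 0 < c → Bb β' = c • Bb β → c = 1 := by
    intro β β' hβ hβ1 hβ' hβ'1 c hc hrel
    by_contra hne
    have hA := hWBfr β hβ hβ1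
    have hA' := hWBfr β' hβ' hβ'1
    have hAne := hWBne β hβ hβ1
    have hA'ne := hWBne β' hβ' hβ'1
    have hBfr := hBbfr β hβ hβ1
    have hBne := hBbne β hβ hβ1
    rcases lt_or_gt_of_ne hne with hlt | hgt
    · have hkey : (w - Bb β) + (1 - c) • Bb β = w - Bb β' := by
        rw [hrel]; module
      have hc0 : (1:ℝ) - c ≠ 0 := by intro h0; rw [sub_eq_zero] at h0; exact hne h0.symm
      obtain ⟨μ, hμ, hμrel⟩ := hous.par hsc (hous.frontier_subset hA) hAne
        (hous.smul_mem (1 - c) (by linarith) _ (hous.frontier_subset hBfr))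
        (smul_ne_zero hc0 hBne)
        (show (w - Bb β) + (1 - c) • Bb β ∈ frontier C by rw [hkey]; exact hA')
      have hBeq : Bb β = ((1 - c)⁻¹ * μ) • (w - Bb β) := by
        rw [← smul_smul, ← hμrel, smul_smul, inv_mul_cancel₀ hc0, one_smul]
      have hw_eq : w = (1 + (1 - c)⁻¹ * μ) • (w - Bb β) := by
        calc w = (w - Bb β) + Bb β := by abel
          _ = (w - Bb β) + ((1 - c)⁻¹ * μ) • (w - Bb β) := by rw [← hBeq]
          _ = (1 + (1 - c)⁻¹ * μ) • (w - Bb β) := by module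
      have hco : 0 < 1 + (1 - c)⁻¹ * μ := by
        have h1 : 0 < (1 - c)⁻¹ := inv_pos.mpr (by linarith)
        nlinarith [mul_pos h1 hμ]
      have h2 := hous.smul_frontier hco hA
      rw [← hw_eq] at h2
      exact hous.interior_notin_frontier hw_int h2
    · have hkey : (w - Bb β') + (c - 1) • Bb β = w - Bb β := by
        rw [hrel]; module
      have hc0 : c - 1 ≠ 0 := by intro h0; rw [sub_eq_zero] at h0; exact hne h0
      obtain ⟨μ, hμ, hμrel⟩ := hous.par hsc (hous.frontier_subset hA') hA'ne
        (hous.smul_mem (c - 1) (by linarith) _ (hous.frontier_subset hBfr))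
        (smul_ne_zero hc0 hBne)
        (show (w - Bb β') + (c - 1) • Bb β ∈ frontier C by rw [hkey]; exact hA)
      have hBeq : Bb β = ((c - 1)⁻¹ * μ) • (w - Bb β') := by
        rw [← smul_smul, ← hμrel, smul_smul, inv_mul_cancel₀ hc0, one_smul]
      have hw_eq : w = (1 + c * ((c - 1)⁻¹ * μ)) • (w - Bb β') := by
        calc w = (w - Bb β') + Bb β' := by abel
          _ = (w - Bb β') + c • Bb β := by rw [hrel]
          _ = (w - Bb β') + c • (((c - 1)⁻¹ * μ) • (w - Bb β')) := by rw [← hBeq]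
          _ = (1 + c * ((c - 1)⁻¹ * μ)) • (w - Bb β') := by rw [smul_smul]; module
      have hco : 0 < 1 + c * ((c - 1)⁻¹ * μ) := by
        have h1 : 0 < (c - 1)⁻¹ := inv_pos.mpr (by linarith)
        nlinarith [mul_pos hc (mul_pos h1 hμ)]
      have h2 := hous.smul_frontier hco hA'
      rw [← hw_eq] at h2
      exact hous.interior_notin_frontier hw_int h2
  have hconst : ∀ β β' : ℝ, 0 < β → β ≠ 1 → 0 < β' → β' ≠ 1 → Bb β' = Bb β := by
    intro β β' hβ hβ1 hβ' hβ'1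
    rcases lt_trichotomy β β' with hlt | heq | hgt
    · obtain ⟨c, hc, hrel⟩ := hc_par β β' hβ hβ1 hβ' hβ'1 hlt
      rw [hc_one β β' hβ hβ1 hβ' hβ'1 c hc hrel, one_smul] at hrel
      exact hrel
    · rw [heq]
    · obtain ⟨c, hc, hrel⟩ := hc_par β' β hβ' hβ'1 hβ hβ1 hgt
      rw [hc_one β' β hβ' hβ'1 hβ hβ1 c hc hrel, one_smul] at hrel
      exact hrel.symm
  have hbform : ∀ β : ℝ, 0 < β → f β = w + (β⁻¹ - 1) • Bb 2 := by
    intro β hβ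
    rcases eq_or_ne β 1 with rfl | hβ1
    · rw [hf1]; simp
    · have h9 : Bb β = Bb 2 := hconst 2 β two_pos (by norm_num) hβ hβ1
      have h10 := hFB β hβ hβ1
      rw [h9] at h10
      exact sub_eq_iff_eq_add'.mp h10
  -- derivative identifications
  have hmono : 𝓝[>] (0:ℝ) ≤ 𝓝[≠] (0:ℝ) :=
    nhdsWithin_mono 0 (fun t ht => Set.mem_compl_singleton_iff.mpr (ne_of_gt ht))
  have hGx : G x = g x := by
    have h1 := (hG x).mono_left hmono
    have h2 : ∀ᶠ t : ℝ in 𝓝[>] 0, t⁻¹ • (g (x + t • x) - g x) = (-(1 + t)⁻¹) • g x := by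
      filter_upwards [self_mem_nhdsWithin] with t ht
      have ht0 : (0:ℝ) < t := ht
      have h1t : (0:ℝ) < 1 + t := by linarith
      have hxx : x + t • x = (1 + t) • x := by module
      rw [hxx, hanti (1 + t) h1t x hx,
        show (1 + t)⁻¹ • g x - g x = ((1 + t)⁻¹ - 1) • g x from by module, smul_smul]
      congr 1
      field_simp
      ring
    have h3 : Tendsto (fun t : ℝ => (-(1 + t)⁻¹) • g x) (𝓝[>] (0:ℝ)) (𝓝 (-(g x))) := by
      have hc : Tendsto (fun t : ℝ => -(1 + t)⁻¹) (𝓝 (0:ℝ)) (𝓝 (-1)) := by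
        have h4 : Tendsto (fun t : ℝ => 1 + t) (𝓝 0) (𝓝 1) := by
          simpa using (continuous_add_left (1:ℝ)).tendsto (0:ℝ)
        simpa using (h4.inv₀ one_ne_zero).neg
      have h5 := hc.smul (tendsto_const_nhds (x := g x) (f := 𝓝 (0:ℝ)))
      rw [show ((-1 : ℝ) • g x) = -(g x) from by module] at h5
      exact h5.mono_left nhdsWithin_le_nhds
    have h4 := tendsto_nhds_unique (Filter.Tendsto.congr' h2 h1) h3
    exact neg_injective h4
  have hGs : G s = Bb 2 := by
    have h1 := (hG s).mono_left hmono
    have h2 : ∀ᶠ t : ℝ in 𝓝[>] 0,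
        t⁻¹ • (g (x + t • s) - g x) = (-(1 + t)⁻¹) • Bb 2 := by
      filter_upwards [self_mem_nhdsWithin] with t ht
      have ht0 : (0:ℝ) < t := ht
      have h1t : (0:ℝ) < 1 + t := by linarith
      have hxx : x + t • s = r + (1 + t) • s := by rw [← hrs]; module
      have h5 : g (x + t • s) = w + ((1 + t)⁻¹ - 1) • Bb 2 := by
        rw [hxx]
        exact hbform (1 + t) h1t
      rw [h5, ← hwdef,
        show w + ((1 + t)⁻¹ - 1) • Bb 2 - w = ((1 + t)⁻¹ - 1) • Bb 2 from by module,
        smul_smul]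
      congr 1
      field_simp
      ring
    have h3 : Tendsto (fun t : ℝ => (-(1 + t)⁻¹) • Bb 2) (𝓝[>] (0:ℝ)) (𝓝 (-(Bb 2))) := by
      have hc : Tendsto (fun t : ℝ => -(1 + t)⁻¹) (𝓝 (0:ℝ)) (𝓝 (-1)) := by
        have h4 : Tendsto (fun t : ℝ => 1 + t) (𝓝 0) (𝓝 1) := by
          simpa using (continuous_add_left (1:ℝ)).tendsto (0:ℝ)
        simpa using (h4.inv₀ one_ne_zero).neg
      have h5 := hc.smul (tendsto_const_nhds (x := Bb 2) (f := 𝓝 (0:ℝ)))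
      rw [show ((-1 : ℝ) • Bb 2) = -(Bb 2) from by module] at h5
      exact h5.mono_left nhdsWithin_le_nhds
    have h4 := tendsto_nhds_unique (Filter.Tendsto.congr' h2 h1) h3
    exact neg_injective h4
  -- conclusion
  intro t
  have het : (0:ℝ) < Real.exp t := Real.exp_pos t
  have he2t : (0:ℝ) < Real.exp (-2 * t) := Real.exp_pos _
  have hsplit : Real.exp t • r + Real.exp (-t) • s
      = Real.exp t • (r + Real.exp (-2 * t) • s) := by
    rw [smul_add, smul_smul, ← Real.exp_add, show t + -2 * t = -t from by ring]
  have hgg : g (Real.exp t • r + Real.exp (-t) • s)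
      = (Real.exp t)⁻¹ • f (Real.exp (-2 * t)) := by
    rw [hsplit, hanti _ het _ (hcurve _ he2t)]
  have hform2 := hbform (Real.exp (-2 * t)) he2t
  have hinv2 : (Real.exp (-2 * t))⁻¹ = Real.exp (2 * t) := by
    rw [← Real.exp_neg, show -(-2 * t) = 2 * t from by ring]
  rw [hgg, hform2, hinv2]
  have hwG : w = G x := by rw [hwdef, ← hGx]
  rw [hwG, ← hGs]
  have hkey2 : (Real.exp t)⁻¹ • (G x + (Real.exp (2 * t) - 1) • G s)
      = G (Real.exp (-t) • r + Real.exp t • s) := by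
    have h1 : (G : V → V) x = G r + G s := by rw [← hrs, map_add]
    rw [h1, map_add, map_smul, map_smul, Real.exp_neg,
      show (2:ℝ) * t = t + t from by ring, Real.exp_add]
    match_scalars
    · ring
    · field_simp
      ring
  rw [hkey2, LinearEquiv.symm_apply_apply]
end

section
/- Let (V,C,u) be an order unit space with a strictly convex cone, g : C° → C° a bijective antihomogeneous order-antimorphism, and x ∈ C°. Let G_x : V → V be a linear bijection with G_x(z) = −lim_{t→0} (g(x+tz) − g(x))/t for all z ∈ V, and let S_x = G_x⁻¹ ∘ g : C° → C°. Then x is the unique fixed point of S_x in C°: if y ∈ C° satisfies S_x(y) = y, then y = x. -/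
open Set Filter Topology

variable {V : Type*} [NormedAddCommGroup V] [NormedSpace ℝ V]

variable {C : Set V} {u : V}

lemma aux_add (hous : IsOrderUnitSpace C u) {a b : V} (ha : a ∈ C) (hb : b ∈ C) :
    a + b ∈ C := by
  have h := hous.convex ha hb (by norm_num : (0:ℝ) ≤ 1/2) (by norm_num : (0:ℝ) ≤ 1/2)
    (by norm_num)
  have h2 := hous.smul_mem 2 (by norm_num) _ h
  have he : (2:ℝ) • ((1/2 : ℝ) • a + (1/2 : ℝ) • b) = a + b := by
    rw [smul_add, smul_smul, smul_smul]; norm_num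
  rwa [he] at h2

lemma aux_zero (hous : IsOrderUnitSpace C u) : (0:V) ∈ C := by
  have := hous.smul_mem 0 le_rfl u hous.unit_mem
  simpa using this

lemma aux_norm (hous : IsOrderUnitSpace C u) (a : V) {l : ℝ} (h : ‖a‖ < l) :
    a + l • u ∈ C ∧ l • u - a ∈ C := by
  obtain ⟨l1, hl1, h1⟩ := hous.order_unit a
  obtain ⟨l2, hl2, h2⟩ := hous.order_unit (-a)
  rw [sub_neg_eq_add] at h2
  have hmem : (l1 + l2 + 1) ∈ {l : ℝ | 0 < l ∧ a + l • u ∈ C ∧ l • u - a ∈ C} := by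
    refine ⟨by linarith, ?_, ?_⟩
    · have := aux_add hous h2 (hous.smul_mem (l1+1) (by linarith) u hous.unit_mem)
      have he : l2 • u + a + (l1+1) • u = a + (l1 + l2 + 1) • u := by module
      rwa [he] at this
    · have := aux_add hous h1 (hous.smul_mem (l2+1) (by linarith) u hous.unit_mem)
      have he : l1 • u - a + (l2+1) • u = (l1 + l2 + 1) • u - a := by module
      rwa [he] at this
  rw [hous.norm_eq a] at h
  obtain ⟨s, hs, hsl⟩ := exists_lt_of_csInf_lt ⟨_, hmem⟩ h
  constructor
  · have := aux_add hous hs.2.1 (hous.smul_mem (l - s) (by linarith) u hous.unit_mem)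
    have he : a + s • u + (l - s) • u = a + l • u := by module
    rwa [he] at this
  · have := aux_add hous hs.2.2 (hous.smul_mem (l - s) (by linarith) u hous.unit_mem)
    have he : s • u - a + (l - s) • u = l • u - a := by module
    rwa [he] at this

lemma aux_smul_u (hous : IsOrderUnitSpace C u) (hu : u ≠ 0) {r : ℝ} (h : r • u ∈ C) :
    0 ≤ r := by
  by_contra hr
  push_neg at hr
  have h2 : (-r)⁻¹ • (r • u) ∈ C :=
    hous.smul_mem _ (by rw [inv_nonneg]; linarith) _ h
  rw [smul_smul] at h2
  have he : (-r)⁻¹ * r = -1 := by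
    rw [inv_neg, neg_mul, inv_mul_cancel₀ (by linarith : r ≠ 0)]
  rw [he, neg_one_smul] at h2
  have hmem : u ∈ C ∩ (-C) := ⟨hous.unit_mem, by simpa using h2⟩
  rw [hous.salient] at hmem
  exact hu hmem

lemma aux_int (hous : IsOrderUnitSpace C u) (z : V) :
    z ∈ interior C ↔ ∃ ε : ℝ, 0 < ε ∧ z - ε • u ∈ C := by
  constructor
  · intro hz
    obtain ⟨ρ, hρ, hball⟩ := Metric.isOpen_iff.1 isOpen_interior z hz
    refine ⟨ρ / (2 * (‖u‖ + 1)), by positivity, ?_⟩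
    have hm : z - (ρ / (2 * (‖u‖ + 1))) • u ∈ Metric.ball z ρ := by
      rw [Metric.mem_ball, dist_eq_norm]
      have he : z - (ρ / (2 * (‖u‖ + 1))) • u - z = -((ρ / (2 * (‖u‖ + 1))) • u) := by abel
      rw [he, norm_neg, norm_smul, Real.norm_eq_abs, abs_of_pos (by positivity)]
      rw [div_mul_eq_mul_div, div_lt_iff₀ (by positivity)]
      nlinarith [norm_nonneg u]
    exact interior_subset (hball hm)
  · rintro ⟨ε, hε, hz⟩
    have hball : Metric.ball z ε ⊆ C := by
      intro d hd
      rw [Metric.mem_ball, dist_eq_norm] at hd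
      have h1 := (aux_norm hous (d - z) hd).1
      have h2 := aux_add hous hz h1
      have he : z - ε • u + (d - z + ε • u) = d := by abel
      rwa [he] at h2
    exact interior_maximal hball Metric.isOpen_ball (Metric.mem_ball_self hε)

lemma aux_int_add (hous : IsOrderUnitSpace C u) {a z : V} (ha : a ∈ C)
    (hz : z ∈ interior C) : a + z ∈ interior C := by
  rw [aux_int hous] at hz ⊢
  obtain ⟨ε, hε, h⟩ := hz
  refine ⟨ε, hε, ?_⟩
  have := aux_add hous ha h
  rwa [show a + (z - ε • u) = a + z - ε • u by abel] at this

lemma aux_int_smul (hous : IsOrderUnitSpace C u) {c : ℝ} (hc : 0 < c) {z : V}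
    (hz : z ∈ interior C) : c • z ∈ interior C := by
  rw [aux_int hous] at hz ⊢
  obtain ⟨ε, hε, h⟩ := hz
  refine ⟨c * ε, by positivity, ?_⟩
  have := hous.smul_mem c hc.le _ h
  rwa [smul_sub, smul_smul] at this

lemma aux_mem_of_forall (hous : IsOrderUnitSpace C u) {z : V}
    (h : ∀ ε : ℝ, 0 < ε → z + ε • u ∈ C) : z ∈ C := by
  have harch := hous.archimedean (-z) u hous.unit_mem ?_
  · rwa [neg_neg] at harch
  · intro n hn
    have hn' : (0:ℝ) < n := Nat.cast_pos.mpr hn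
    have h1 := h (n:ℝ)⁻¹ (by positivity)
    have h2 := hous.smul_mem n hn'.le _ h1
    have he : (n:ℝ) • (z + (n:ℝ)⁻¹ • u) = u - (n:ℝ) • (-z) := by
      rw [smul_add, smul_smul, mul_inv_cancel₀ hn'.ne', one_smul, smul_neg]
      abel
    rwa [he] at h2

lemma aux_closed (hous : IsOrderUnitSpace C u) : IsClosed C := by
  have hsub : closure C ⊆ C := by
    intro z hz
    apply aux_mem_of_forall hous
    intro ε hε
    obtain ⟨a, haC, hd⟩ := Metric.mem_closure_iff.1 hz ε hε
    rw [dist_eq_norm] at hd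
    have h1 := (aux_norm hous (z - a) hd).1
    have h2 := aux_add hous haC h1
    rwa [show a + (z - a + ε • u) = z + ε • u by abel] at h2
  exact isClosed_of_closure_subset hsub

lemma aux_scale (hous : IsOrderUnitSpace C u) {c : ℝ} (hc : 0 < c) {z : V} :
    z ∈ C ↔ c • z ∈ C := by
  constructor
  · exact fun h => hous.smul_mem c hc.le z h
  · intro h
    have := hous.smul_mem c⁻¹ (by positivity) _ h
    rwa [smul_smul, inv_mul_cancel₀ hc.ne', one_smul] at this

set_option maxHeartbeats 1600000 in
/-- **Proposition** (unique fixed point). The symmetry `S_x = G_x⁻¹ ∘ g` has `x`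
as its unique fixed point in `C°`. -/
theorem symmetry_unique_fixed_point
    (C : Set V) (u : V) (hous : IsOrderUnitSpace C u) (hsc : StrictlyConvexCone C)
    (g : V → V) (hbij : Set.BijOn g (interior C) (interior C))
    (hanti : IsAntihomogeneous C g) (hmor : IsOrderAntimorphism C g)
    (x : V) (hx : x ∈ interior C)
    (G : V ≃ₗ[ℝ] V)
    (hG : ∀ z : V, Tendsto (fun t : ℝ => t⁻¹ • (g (x + t • z) - g x))
      (𝓝[≠] (0:ℝ)) (𝓝 (-(G z)))) :
    ∀ y ∈ interior C, G.symm (g y) = y → y = x := by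
  intro y hy hfix
  by_cases hu : u = 0
  · -- degenerate case: V has only 0
    have hall : ∀ w : V, w = 0 := by
      intro w
      obtain ⟨l, -, h1⟩ := hous.order_unit w
      obtain ⟨l', -, h2⟩ := hous.order_unit (-w)
      rw [hu, smul_zero, zero_sub] at h1 h2
      rw [neg_neg] at h2
      have hmem : w ∈ C ∩ (-C) := ⟨h2, Set.mem_neg.mpr h1⟩
      rw [hous.salient] at hmem
      exact hmem
    rw [hall y, hall x]
  -- g y = G y
  have hgyG : g y = G y := by
    conv_rhs => rw [← hfix]
    rw [LinearEquiv.apply_symm_apply]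
  have hgint : ∀ z ∈ interior C, g z ∈ interior C := fun z hz => hbij.mapsTo hz
  -- g x = G x
  have hgxG : g x = G x := by
    have h1 := hG x
    have h2 : ∀ᶠ t in 𝓝[≠] (0:ℝ), t⁻¹ • (g (x + t • x) - g x) = (-(1+t)⁻¹) • g x := by
      have hev : ∀ᶠ t in 𝓝 (0:ℝ), (0:ℝ) < 1 + t := by
        filter_upwards [Ioi_mem_nhds (show (-1:ℝ) < 0 by norm_num)] with t ht
        have := Set.mem_Ioi.1 ht; linarith
      filter_upwards [eventually_nhdsWithin_of_eventually_nhds hev,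
        self_mem_nhdsWithin] with t ht htne
      have htne' : t ≠ 0 := htne
      have he1 : x + t • x = (1+t) • x := by module
      rw [he1, hanti (1+t) ht x hx]
      have he2 : (1+t)⁻¹ • g x - g x = ((1+t)⁻¹ - 1) • g x := by
        rw [sub_smul, one_smul]
      rw [he2, smul_smul]
      congr 1
      field_simp
      ring
    have h3 : Tendsto (fun t : ℝ => (-(1+t)⁻¹) • g x) (𝓝[≠] (0:ℝ)) (𝓝 (-(g x))) := by
      have hs : Tendsto (fun t : ℝ => -(1+t)⁻¹) (𝓝 (0:ℝ)) (𝓝 (-1)) := by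
        have hc : ContinuousAt (fun t : ℝ => -(1+t)⁻¹) 0 :=
          (((continuousAt_const.add continuousAt_id).inv₀ (by norm_num)).neg)
        have := hc.tendsto
        norm_num at this
        exact this.neg
      have := hs.smul (tendsto_const_nhds : Tendsto (fun _ : ℝ => g x) (𝓝 (0:ℝ)) (𝓝 (g x)))
      rw [neg_one_smul] at this
      exact this.mono_left nhdsWithin_le_nhds
    have h4 := (tendsto_congr' h2).1 h1
    have := tendsto_nhds_unique h4 h3
    exact (neg_inj.1 this).symm
  have hclosed := aux_closed hous
  -- G is positive
  have hGpos : ∀ z, z ∈ C → G z ∈ C := by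
    intro z hz
    have hsub1 : Set.Ioi (0:ℝ) ⊆ {(0:ℝ)}ᶜ := fun t ht =>
      Set.mem_compl_singleton_iff.2 (ne_of_gt ht)
    have h1 : Tendsto (fun t : ℝ => t⁻¹ • (g x - g (x + t • z))) (𝓝[>] (0:ℝ))
        (𝓝 (G z)) := by
      have h0 := ((hG z).mono_left (nhdsWithin_mono 0 hsub1)).neg
      simp only [← smul_neg, neg_sub, neg_neg] at h0
      exact h0
    have h2 : ∀ᶠ t in 𝓝[>] (0:ℝ), t⁻¹ • (g x - g (x + t • z)) ∈ C := by
      have hev : ∀ᶠ t in 𝓝 (0:ℝ), x + t • z ∈ interior C := by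
        have hc : ContinuousAt (fun t : ℝ => x + t • z) 0 := by fun_prop
        have := hc.eventually_mem (show interior C ∈ 𝓝 (x + (0:ℝ) • z) by
          simpa using isOpen_interior.mem_nhds hx)
        exact this
      filter_upwards [eventually_nhdsWithin_of_eventually_nhds hev,
        self_mem_nhdsWithin] with t hint ht
      have ht' : 0 < t := ht
      have hm := (hmor x hx _ hint).1 (by
        have : x + t • z - x = t • z := by abel
        rw [this]
        exact hous.smul_mem t ht'.le z hz)
      exact hous.smul_mem t⁻¹ (by positivity) _ hm
    exact hclosed.mem_of_tendsto h1 h2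
  -- interior constants
  obtain ⟨cx, hcx, hcxm⟩ := (aux_int hous x).1 hx
  obtain ⟨cy, hcy, hcym⟩ := (aux_int hous y).1 hy
  have hxn : (‖x‖+1) • u - x ∈ C := (aux_norm hous x (lt_add_one _)).2
  have hyn : (‖y‖+1) • u - y ∈ C := (aux_norm hous y (lt_add_one _)).2
  have hwn : (‖G y‖+1) • u - G y ∈ C := (aux_norm hous (G y) (lt_add_one _)).2
  -- key equivalence
  have hE : ∀ b : ℝ, 0 < b → ∀ p ∈ interior C, ∀ q ∈ interior C,
      (b • p - q ∈ C ↔ b • g q - g p ∈ C) := by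
    intro b hb p hp q hq
    have h1 := hmor q hq (b • p) (aux_int_smul hous hb hp)
    rw [hanti b hb p hp] at h1
    have h2 : b • (g q - b⁻¹ • g p) = b • g q - g p := by
      rw [smul_sub, smul_smul, mul_inv_cancel₀ hb.ne', one_smul]
    rw [h1, aux_scale hous hb, h2]
  -- the sets S and A
  set S : Set ℝ := {b : ℝ | 0 < b ∧ b • x - y ∈ C} with hSdef
  set A : Set ℝ := {a : ℝ | 0 < a ∧ y - a • x ∈ C} with hAdef
  have hSmem : (‖y‖+1)/cx ∈ S := by
    rw [hSdef]
    refine ⟨by positivity, ?_⟩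
    have h1 := hous.smul_mem ((‖y‖+1)/cx) (by positivity) _ hcxm
    have h2 := aux_add hous h1 hyn
    have he : ((‖y‖+1)/cx) • (x - cx • u) + ((‖y‖+1) • u - y) = ((‖y‖+1)/cx) • x - y := by
      rw [smul_sub, smul_smul, div_mul_cancel₀ _ hcx.ne']
      abel
    rwa [he] at h2
  have hAmem : cy/(‖x‖+1) ∈ A := by
    rw [hAdef]
    refine ⟨by positivity, ?_⟩
    have h1 := hous.smul_mem (cy/(‖x‖+1)) (by positivity) _ hxn
    have h2 := aux_add hous hcym h1
    have he : (y - cy • u) + (cy/(‖x‖+1)) • ((‖x‖+1) • u - x) = y - (cy/(‖x‖+1)) • x := by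
      rw [smul_sub, smul_smul, div_mul_cancel₀ _ (by positivity : (‖x‖:ℝ)+1 ≠ 0)]
      abel
    rwa [he] at h2
  have hSne : S.Nonempty := ⟨_, hSmem⟩
  have hAne : A.Nonempty := ⟨_, hAmem⟩
  have hSbdd : BddBelow S := ⟨0, fun b hb => hb.1.le⟩
  have hAbdd : BddAbove A := by
    refine ⟨(‖y‖+1)/cx, fun a ha => ?_⟩
    obtain ⟨ha1, ha2⟩ := ha
    have h1 := hous.smul_mem a ha1.le _ hcxm
    have h2 := aux_add hous (aux_add hous ha2 h1) hyn
    have he : (y - a • x + a • (x - cx • u)) + ((‖y‖+1) • u - y) = ((‖y‖+1) - a*cx) • u := by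
      module
    rw [he] at h2
    have h3 := aux_smul_u hous hu h2
    rw [le_div_iff₀ hcx]
    linarith
  set β := sInf S with hbdef
  set α := sSup A with hadef
  have hβpos : 0 < β := by
    have hlb : ∀ b ∈ S, cy/(‖x‖+1) ≤ b := by
      intro b hb
      obtain ⟨hb1, hb2⟩ := hb
      have h1 := hous.smul_mem b hb1.le _ hxn
      have h2 := aux_add hous (aux_add hous h1 hb2) hcym
      have he : (b • ((‖x‖+1) • u - x) + (b • x - y)) + (y - cy • u) = (b*(‖x‖+1) - cy) • u := by
        module
      rw [he] at h2
      have h3 := aux_smul_u hous hu h2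
      rw [div_le_iff₀ (by positivity)]
      linarith
    exact lt_of_lt_of_le (by positivity) (le_csInf hSne hlb)
  have hαpos : 0 < α := lt_of_lt_of_le (by positivity) (le_csSup hAbdd hAmem)
  -- attainment
  have hβS : β • x - y ∈ C := by
    apply aux_mem_of_forall hous
    intro ε hε
    obtain ⟨b, hbS, hblt⟩ := exists_lt_of_csInf_lt hSne
      (lt_add_of_pos_right β (show 0 < ε/(‖x‖+1) by positivity))
    have hβb : β ≤ b := csInf_le hSbdd hbS
    have hcoef : 0 ≤ ε - (b-β)*(‖x‖+1) := by
      have h5 : (b - β) * (‖x‖+1) ≤ (ε/(‖x‖+1)) * (‖x‖+1) := by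
        apply mul_le_mul_of_nonneg_right _ (by positivity)
        linarith
      rw [div_mul_cancel₀ _ (by positivity : (‖x‖:ℝ)+1 ≠ 0)] at h5
      linarith
    have h1 := hous.smul_mem (b - β) (by linarith) _ hxn
    have h2 := hous.smul_mem (ε - (b-β)*(‖x‖+1)) hcoef u hous.unit_mem
    have h3 := aux_add hous (aux_add hous hbS.2 h1) h2
    have he : (b • x - y + (b-β) • ((‖x‖+1) • u - x)) + (ε - (b-β)*(‖x‖+1)) • u
        = β • x - y + ε • u := by
      module
    rwa [he] at h3
  have hαA : y - α • x ∈ C := by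
    apply aux_mem_of_forall hous
    intro ε hε
    obtain ⟨a, haA, halt⟩ := exists_lt_of_lt_csSup hAne
      (show α - ε/(‖x‖+1) < α by
        have : 0 < ε/(‖x‖+1) := by positivity
        linarith)
    have haα : a ≤ α := le_csSup hAbdd haA
    have hcoef : 0 ≤ ε - (α-a)*(‖x‖+1) := by
      have h5 : (α - a) * (‖x‖+1) ≤ (ε/(‖x‖+1)) * (‖x‖+1) := by
        apply mul_le_mul_of_nonneg_right _ (by positivity)
        linarith
      rw [div_mul_cancel₀ _ (by positivity : (‖x‖:ℝ)+1 ≠ 0)] at h5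
      linarith
    have h1 := hous.smul_mem (α - a) (by linarith) _ hxn
    have h2 := hous.smul_mem (ε - (α-a)*(‖x‖+1)) hcoef u hous.unit_mem
    have h3 := aux_add hous (aux_add hous haA.2 h1) h2
    have he : (y - a • x + (α-a) • ((‖x‖+1) • u - x)) + (ε - (α-a)*(‖x‖+1)) • u
        = y - α • x + ε • u := by
      module
    rwa [he] at h3
  -- transfer via G and g
  have hP1 : β • G x - G y ∈ C := by
    have := hGpos _ hβS
    rwa [map_sub, map_smul] at this
  have hP2 : G y - α • G x ∈ C := by
    have := hGpos _ hαA
    rwa [map_sub, map_smul] at this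
  have hA_of : ∀ a : ℝ, 0 < a → G x - a • G y ∈ C → a ≤ α := by
    intro a ha hmem
    have h1 := hous.smul_mem a⁻¹ (by positivity) _ hmem
    rw [smul_sub, smul_smul, inv_mul_cancel₀ ha.ne', one_smul] at h1
    have h3 := hE a⁻¹ (by positivity) y hy x hx
    rw [hgxG, hgyG] at h3
    have h2 := h3.2 h1
    have h4 := hous.smul_mem a ha.le _ h2
    rw [smul_sub, smul_smul, mul_inv_cancel₀ ha.ne', one_smul] at h4
    exact le_csSup hAbdd ⟨ha, h4⟩
  have hS_of : ∀ b : ℝ, 0 < b → b • G y - G x ∈ C → β ≤ b := by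
    intro b hb hmem
    have h3 := hE b hb x hx y hy
    rw [hgxG, hgyG] at h3
    exact csInf_le hSbdd ⟨hb, h3.2 hmem⟩
  have h1le : β⁻¹ ≤ α := by
    apply hA_of _ (by positivity)
    have h1 := hous.smul_mem β⁻¹ (by positivity) _ hP1
    rwa [smul_sub, smul_smul, inv_mul_cancel₀ hβpos.ne', one_smul] at h1
  have h2le : β ≤ α⁻¹ := by
    apply hS_of _ (by positivity)
    have h1 := hous.smul_mem α⁻¹ (by positivity) _ hP2
    rwa [smul_sub, smul_smul, inv_mul_cancel₀ hαpos.ne', one_smul] at h1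
  have hαβ : α = β⁻¹ := by
    have e1 : 1 ≤ β * α := by
      have := mul_le_mul_of_nonneg_left h1le hβpos.le
      rwa [mul_inv_cancel₀ hβpos.ne'] at this
    have e2 : α * β ≤ 1 := by
      have := mul_le_mul_of_nonneg_left h2le hαpos.le
      rwa [mul_inv_cancel₀ hαpos.ne'] at this
    have e3 : α * β = 1 := le_antisymm e2 (by nlinarith)
    exact eq_inv_of_mul_eq_one_right (by nlinarith : β * α = 1)
  have hβyx : β • y - x ∈ C := by
    have h3 := hE β hβpos y hy x hx
    rw [hgxG, hgyG] at h3
    exact h3.2 hP1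
  -- β•Gx - Gy is a boundary point
  have hF0nint : β • G x - G y ∉ interior C := by
    intro hint
    obtain ⟨ε, hε, h1⟩ := (aux_int hous _).1 hint
    have hδpos : 0 < ε/(‖G y‖+1) := by positivity
    have hde : (ε/(‖G y‖+1)) * (‖G y‖+1) = ε :=
      div_mul_cancel₀ _ (by positivity : (‖G y‖:ℝ)+1 ≠ 0)
    have h2 := hous.smul_mem (ε/(‖G y‖+1)) hδpos.le _ hwn
    have h3 := aux_add hous h1 h2
    have he : (β • G x - G y - ε • u) + (ε/(‖G y‖+1)) • ((‖G y‖+1) • u - G y)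
        = β • G x - (1 + ε/(‖G y‖+1)) • G y := by
      rw [smul_sub, smul_smul, hde, add_smul, one_smul]
      abel
    rw [he] at h3
    have h4 := hous.smul_mem β⁻¹ (by positivity) _ h3
    rw [smul_sub, smul_smul, smul_smul, inv_mul_cancel₀ hβpos.ne', one_smul] at h4
    have h5 := hA_of (β⁻¹ * (1 + ε/(‖G y‖+1))) (by positivity) h4
    rw [hαβ] at h5
    have h6 : β⁻¹ * (1 + ε/(‖G y‖+1)) ≤ β⁻¹ * 1 := by rwa [mul_one]
    have h7 := le_of_mul_le_mul_left h6 (by positivity : (0:ℝ) < β⁻¹)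
    linarith
  -- Hahn-Banach: supporting functional
  obtain ⟨f, hf⟩ := geometric_hahn_banach_point_open hous.convex.interior
    isOpen_interior hF0nint
  have hfint : ∀ a ∈ interior C, 0 ≤ f a := by
    intro a ha
    by_contra hneg
    push_neg at hneg
    set t : ℝ := max 1 (f (β • G x - G y) / f a + 1) with htdef
    have ht1 : (0:ℝ) < t := lt_of_lt_of_le one_pos (le_max_left _ _)
    have h2 := hf (t • a) (aux_int_smul hous ht1 ha)
    rw [map_smul, smul_eq_mul] at h2
    have h3 : f (β • G x - G y) / f a < t :=
      lt_of_lt_of_le (lt_add_one _) (le_max_right _ _)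
    rw [div_lt_iff_of_neg hneg] at h3
    linarith
  have hfC : ∀ a ∈ C, 0 ≤ f a := by
    intro a ha
    by_contra hneg
    push_neg at hneg
    have hfx : 0 ≤ f x := hfint x hx
    have hs0 : 0 < -f a / (f x + 1) := div_pos (by linarith) (by linarith)
    have h1 := hfint _ (aux_int_add hous ha (aux_int_smul hous hs0 hx))
    rw [map_add, map_smul, smul_eq_mul] at h1
    have h2 : (-f a / (f x + 1)) * f x < (-f a / (f x + 1)) * (f x + 1) :=
      mul_lt_mul_of_pos_left (lt_add_one _) hs0
    rw [div_mul_cancel₀ _ (by linarith : f x + 1 ≠ 0)] at h2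
    linarith
  have hfple : f (β • G x - G y) ≤ 0 := by
    by_contra hpos
    push_neg at hpos
    have hfx : 0 ≤ f x := hfint x hx
    have ht0 : 0 < f (β • G x - G y) / (2 * (f x + 1)) := div_pos hpos (by linarith)
    have h2 := hf _ (aux_int_smul hous ht0 hx)
    rw [map_smul, smul_eq_mul] at h2
    have h3 : (f (β • G x - G y) / (2 * (f x + 1))) * f x
        ≤ (f (β • G x - G y) / (2 * (f x + 1))) * (f x + 1) :=
      mul_le_mul_of_nonneg_left (by linarith) ht0.le
    have h4 : (f (β • G x - G y) / (2 * (f x + 1))) * (f x + 1)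
        = f (β • G x - G y) / 2 := by
      rw [← div_div, div_mul_cancel₀ _ (by linarith : f x + 1 ≠ 0)]
    linarith
  have hfp0 : f (β • G x - G y) = 0 := le_antisymm hfple (hfC _ hP1)
  have hfw : 0 < f (G y) := by
    have := hf (G y) (hgyG ▸ hgint y hy)
    rwa [hfp0] at this
  -- the curve t ↦ (β+t) • g(x+t•y) - G y stays in C
  set F : ℝ → V := fun t => (β + t) • g (x + t • y) - G y with hFdef
  have hF0 : F 0 = β • G x - G y := by
    rw [hFdef]
    simp [hgxG]
  have hten : Tendsto (fun t : ℝ => t⁻¹ • (g (x + t • y) - G x)) (𝓝[≠] (0:ℝ))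
      (𝓝 (-(G y))) := by
    have := hG y
    simp only [hgxG] at this
    exact this
  have hβF : Tendsto (fun t : ℝ => β + t) (𝓝[≠] (0:ℝ)) (𝓝 β) := by
    have h0 : Tendsto (fun t : ℝ => β + t) (𝓝 0) (𝓝 (β + 0)) :=
      (continuous_const.add continuous_id).tendsto 0
    rw [add_zero] at h0
    exact h0.mono_left nhdsWithin_le_nhds
  have htenF : Tendsto (fun t : ℝ => t⁻¹ • (F t - F 0)) (𝓝[≠] (0:ℝ))
      (𝓝 (G x - β • G y)) := by
    have h1 := (hβF.smul hten).add
      (tendsto_const_nhds : Tendsto (fun _ : ℝ => G x) (𝓝[≠] (0:ℝ)) (𝓝 (G x)))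
    have hval : β • -G y + G x = G x - β • G y := by
      rw [smul_neg]; abel
    rw [hval] at h1
    refine (tendsto_congr' ?_).1 h1
    filter_upwards [self_mem_nhdsWithin] with t ht
    have htne : t ≠ 0 := ht
    rw [hF0]
    simp only [hFdef]
    match_scalars <;> field_simp <;> ring
  have hevF : ∀ᶠ t in 𝓝 (0:ℝ), F t ∈ C := by
    have hev1 : ∀ᶠ t in 𝓝 (0:ℝ), x + t • y ∈ interior C := by
      have hc : ContinuousAt (fun t : ℝ => x + t • y) 0 := by fun_prop
      exact hc.eventually_mem (show interior C ∈ 𝓝 (x + (0:ℝ) • y) by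
        simpa using isOpen_interior.mem_nhds hx)
    have hev2 : ∀ᶠ t in 𝓝 (0:ℝ), 0 < β + t := by
      filter_upwards [Ioi_mem_nhds (show -β < (0:ℝ) by linarith)] with t ht
      have := Set.mem_Ioi.1 ht; linarith
    filter_upwards [hev1, hev2] with t h1 h2
    have h3 := (hmor (x + t • y) h1 ((β + t) • y) (aux_int_smul hous h2 hy)).1 (by
      have he : (β + t) • y - (x + t • y) = β • y - x := by module
      rw [he]; exact hβyx)
    rw [hanti (β+t) h2 y hy] at h3
    have h4 := hous.smul_mem (β+t) h2.le _ h3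
    rw [smul_sub, smul_smul, mul_inv_cancel₀ h2.ne', one_smul, hgyG] at h4
    rw [hFdef]
    exact h4
  -- pass to the functional
  have htenf : Tendsto (fun t : ℝ => t⁻¹ * f (F t)) (𝓝[≠] (0:ℝ))
      (𝓝 (f (G x) - β * f (G y))) := by
    have h1 := (f.continuous.tendsto _).comp htenF
    have h3 : (fun t : ℝ => f (t⁻¹ • (F t - F 0))) = fun t : ℝ => t⁻¹ * f (F t) := by
      funext t
      rw [map_smul, map_sub, smul_eq_mul, hF0, hfp0, sub_zero]
    rw [show f (G x - β • G y) = f (G x) - β * f (G y) by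
      rw [map_sub, map_smul, smul_eq_mul]] at h1
    rw [← h3]
    exact h1
  have hsub1 : Set.Ioi (0:ℝ) ⊆ {(0:ℝ)}ᶜ := fun t ht =>
    Set.mem_compl_singleton_iff.2 (ne_of_gt ht)
  have hsub2 : Set.Iio (0:ℝ) ⊆ {(0:ℝ)}ᶜ := fun t ht =>
    Set.mem_compl_singleton_iff.2 (ne_of_lt ht)
  have hge : 0 ≤ f (G x) - β * f (G y) := by
    refine ge_of_tendsto (htenf.mono_left (nhdsWithin_mono 0 hsub1)) ?_
    filter_upwards [eventually_nhdsWithin_of_eventually_nhds hevF,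
      self_mem_nhdsWithin] with t h1 h2
    have ht : (0:ℝ) < t := h2
    exact mul_nonneg (by positivity) (hfC _ h1)
  have hle2 : f (G x) - β * f (G y) ≤ 0 := by
    refine le_of_tendsto (htenf.mono_left (nhdsWithin_mono 0 hsub2)) ?_
    filter_upwards [eventually_nhdsWithin_of_eventually_nhds hevF,
      self_mem_nhdsWithin] with t h1 h2
    have ht : t < 0 := h2
    have h3 := hfC _ h1
    have h4 : t⁻¹ ≤ 0 := inv_nonpos.mpr ht.le
    exact mul_nonpos_iff.2 (Or.inr ⟨h4, h3⟩)
  have hkey : f (G x) = β * f (G y) := by linarith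
  have hp' : β * f (G x) - f (G y) = 0 := by
    have := hfp0
    rw [map_sub, map_smul, smul_eq_mul] at this
    linarith
  have hβ1 : β = 1 := by
    have h1 : (β * β - 1) * f (G y) = 0 := by linear_combination hp' - β * hkey
    have h2 : β * β - 1 = 0 := by
      rcases mul_eq_zero.1 h1 with h | h
      · exact h
      · linarith
    have h3 : (β - 1) * (β + 1) = 0 := by linear_combination h2
    rcases mul_eq_zero.1 h3 with h | h
    · linarith
    · linarith
  -- conclude
  have hxy : x - y ∈ C := by
    have := hβS
    rwa [hβ1, one_smul] at this
  have hyx2 : y - x ∈ C := by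
    have := hαA
    rw [hαβ, hβ1, inv_one, one_smul] at this
    exact this
  have hmem : y - x ∈ C ∩ (-C) := ⟨hyx2, by
    rw [Set.mem_neg, neg_sub]
    exact hxy⟩
  rw [hous.salient] at hmem
  have := Set.mem_singleton_iff.1 hmem
  exact sub_eq_zero.1 this
end

section
/- Let (V,C,u) be an order unit space with a smooth cone, η ∈ ∂C ∖ {0}, and φ the state with φ(η) = 0. Suppose z ∈ C with φ(z) > 0, and for 0 < s ≤ 1 set y_s = (1−s)η + su and z_s = (1−s)z + su (both in C°). If for each s ∈ (0,1], φ_s is a state with M(z_s/y_s) = φ_s(z_s)/φ_s(y_s), then φ_s(η) → 0 as s → 0⁺, and φ_s converges to φ in the weak* topology as s → 0⁺ (i.e. φ_s(v) → φ(v) for every v ∈ V). -/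
open Set Filter Topology

variable {V : Type*} [NormedAddCommGroup V] [NormedSpace ℝ V]

/-- The cone `C` is smooth: every nonzero boundary point has a unique supporting
state. -/
def SmoothCone (C : Set V) (u : V) : Prop :=
  ∀ η ∈ frontier C, η ≠ 0 → ∃! φ : V →ₗ[ℝ] ℝ, IsState C u φ ∧ φ η = 0

namespace IsOrderUnitSpace

variable {C : Set V} {u : V}

lemma add_mem_s15 (h : IsOrderUnitSpace C u) {x y : V} (hx : x ∈ C) (hy : y ∈ C) :
    x + y ∈ C := by
  have hh := h.smul_mem 2 (by norm_num) _
    (h.convex hx hy (show (0:ℝ) ≤ 1/2 by norm_num) (show (0:ℝ) ≤ 1/2 by norm_num)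
      (by norm_num))
  convert hh using 1
  module

lemma normSet_nonempty (h : IsOrderUnitSpace C u) (x : V) :
    {l : ℝ | 0 < l ∧ x + l • u ∈ C ∧ l • u - x ∈ C}.Nonempty := by
  obtain ⟨l1, hl1, hl1'⟩ := h.order_unit x
  obtain ⟨l2, hl2, hl2'⟩ := h.order_unit (-x)
  refine ⟨l1 + l2 + 1, by positivity, ?_, ?_⟩
  · have := h.add_mem_s15 (h.smul_mem (l1 + 1) (by positivity) u h.unit_mem) hl2'
    convert this using 1
    module
  · have := h.add_mem_s15 (h.smul_mem (l2 + 1) (by positivity) u h.unit_mem) hl1'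
    convert this using 1
    module

lemma abs_state_le (h : IsOrderUnitSpace C u) {φ : V →ₗ[ℝ] ℝ} (hφ : IsState C u φ)
    (x : V) : |φ x| ≤ ‖x‖ := by
  by_contra hcon
  push_neg at hcon
  obtain ⟨l, hlS, hl⟩ := Real.lt_sInf_add_pos (h.normSet_nonempty x)
    (show (0:ℝ) < (|φ x| - ‖x‖) / 2 by linarith)
  rw [← h.norm_eq x] at hl
  obtain ⟨hl0, hm1, hm2⟩ := hlS
  have h1 : 0 ≤ φ x + l := by
    have := hφ.1 _ hm1
    simpa [map_add, map_smul, smul_eq_mul, hφ.2] using this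
  have h2 : 0 ≤ l - φ x := by
    have := hφ.1 _ hm2
    simpa [map_sub, map_smul, smul_eq_mul, hφ.2] using this
  have : |φ x| ≤ l := abs_le.mpr ⟨by linarith, by linarith⟩
  linarith

lemma closure_subset (h : IsOrderUnitSpace C u) : closure C ⊆ C := by
  intro x hx
  have key : ∀ ε : ℝ, 0 < ε → x + ε • u ∈ C := by
    intro ε hε
    obtain ⟨y, hyC, hxy⟩ := Metric.mem_closure_iff.mp hx ε hε
    have hnorm : ‖x - y‖ < ε := by rwa [dist_eq_norm] at hxy
    obtain ⟨l, hlS, hl⟩ := Real.lt_sInf_add_pos (h.normSet_nonempty (x - y))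
      (show (0:ℝ) < ε - ‖x - y‖ by linarith)
    rw [← h.norm_eq (x - y)] at hl
    obtain ⟨hl0, hm1, -⟩ := hlS
    have h1 : (x - y + l • u) + y ∈ C := h.add_mem_s15 hm1 hyC
    have h2 : ((x - y + l • u) + y) + (ε - l) • u ∈ C :=
      h.add_mem_s15 h1 (h.smul_mem _ (by linarith) u h.unit_mem)
    convert h2 using 1
    module
  have harch : ∀ n : ℕ, 0 < n → u - (n : ℝ) • (-x) ∈ C := by
    intro n hn
    have hn0 : (0:ℝ) < (n : ℝ) := by positivity
    have hinv : (0:ℝ) < ((n : ℝ))⁻¹ := by positivity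
    have := h.smul_mem (n : ℝ) hn0.le _ (key _ hinv)
    convert this using 1
    rw [smul_add, smul_smul, mul_inv_cancel₀ hn0.ne', one_smul, smul_neg,
      sub_neg_eq_add, add_comm]
  have := h.archimedean (-x) u h.unit_mem harch
  simpa using this

/-- A state as a continuous linear functional of norm at most one. -/
noncomputable def stateCLM (h : IsOrderUnitSpace C u) (φ : V →ₗ[ℝ] ℝ)
    (hφ : IsState C u φ) : StrongDual ℝ V :=
  LinearMap.mkContinuous φ 1 fun x => by
    rw [Real.norm_eq_abs, one_mul]; exact h.abs_state_le hφ x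

lemma stateCLM_apply (h : IsOrderUnitSpace C u) (φ : V →ₗ[ℝ] ℝ)
    (hφ : IsState C u φ) (x : V) : h.stateCLM φ hφ x = φ x := rfl

lemma stateCLM_norm_le (h : IsOrderUnitSpace C u) (φ : V →ₗ[ℝ] ℝ)
    (hφ : IsState C u φ) : ‖h.stateCLM φ hφ‖ ≤ 1 :=
  LinearMap.mkContinuous_norm_le φ zero_le_one _

end IsOrderUnitSpace

set_option maxHeartbeats 1000000 in
/-- **Lemma 2.4**. In an order unit space with a smooth cone, states `φ_s`
attaining `M(z_s/y_s)` (for `y_s = (1−s)η + su`, `z_s = (1−s)z + su`) satisfy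
`φ_s(η) → 0` and `φ_s → φ` in the weak* topology as `s → 0⁺`. -/
theorem attaining_states_weakstar_converge
    (C : Set V) (u : V) (hous : IsOrderUnitSpace C u) (hsm : SmoothCone C u)
    (η : V) (hη : η ∈ frontier C) (hη0 : η ≠ 0)
    (φ : V →ₗ[ℝ] ℝ) (hφ : IsState C u φ) (hφη : φ η = 0)
    (z : V) (hz : z ∈ C) (hφz : 0 < φ z)
    (φs : ℝ → (V →ₗ[ℝ] ℝ))
    (hφs : ∀ s ∈ Set.Ioc (0:ℝ) 1, IsState C u (φs s) ∧
      Mratio C ((1 - s) • z + s • u) ((1 - s) • η + s • u) =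
        φs s ((1 - s) • z + s • u) / φs s ((1 - s) • η + s • u)) :
    Tendsto (fun s : ℝ => φs s η) (𝓝[>] (0:ℝ)) (𝓝 0) ∧
    ∀ v : V, Tendsto (fun s : ℝ => φs s v) (𝓝[>] (0:ℝ)) (𝓝 (φ v)) := by
  classical
  have hηC : η ∈ C := hous.closure_subset (frontier_subset_closure hη)
  set c : ℝ := 4 * (‖z‖ + 1) / φ z with hc
  -- the pointwise bound
  have hbound : ∀ s ∈ Set.Ioc (0:ℝ) (1/2 : ℝ), φs s η ∈ Set.Icc 0 (c * s) := by
    rintro s ⟨hs0, hs2⟩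
    have hs1 : s ∈ Set.Ioc (0:ℝ) 1 := ⟨hs0, by linarith⟩
    obtain ⟨hstate, hM⟩ := hφs s hs1
    set ys := (1 - s) • η + s • u with hys
    set zs := (1 - s) • z + s • u with hzs
    have ha0 : 0 ≤ φs s η := hstate.1 η hηC
    have hφys : φ ys = s := by
      simp [hys, map_add, map_smul, smul_eq_mul, hφη, hφ.2]
    have hφzs : φ zs = (1 - s) * φ z + s := by
      simp [hzs, map_add, map_smul, smul_eq_mul, hφ.2]
    -- the set defining the Mratio is nonempty
    obtain ⟨l, hl0, hlu⟩ := hous.order_unit zs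
    have hSmem : (l + 1) / s ∈ {b : ℝ | 0 < b ∧ b • ys - zs ∈ C} := by
      refine ⟨by positivity, ?_⟩
      have h1 : ((l + 1) / s * (1 - s)) • η ∈ C :=
        hous.smul_mem _ (mul_nonneg (by positivity) (by linarith)) η hηC
      have h2 : u + (l • u - zs) ∈ C := hous.add_mem_s15 hous.unit_mem hlu
      have h3 := hous.add_mem_s15 h1 h2
      convert h3 using 1
      rw [hys]
      match_scalars <;> field_simp <;> ring
    -- lower bound on the Mratio
    have hMge : ((1 - s) * φ z + s) / s ≤ Mratio C zs ys := by
      refine le_csInf ⟨_, hSmem⟩ ?_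
      rintro b ⟨hb0, hbmem⟩
      have hpos := hφ.1 _ hbmem
      have hval : φ (b • ys - zs) = b * s - ((1 - s) * φ z + s) := by
        simp [map_sub, map_smul, smul_eq_mul, hφys, hφzs]
      rw [div_le_iff₀ hs0]
      rw [hval] at hpos
      linarith
    have haeval : φs s ys = (1 - s) * φs s η + s := by
      simp [hys, map_add, map_smul, smul_eq_mul, hstate.2]
    have hzseval : φs s zs = (1 - s) * φs s z + s := by
      simp [hzs, map_add, map_smul, smul_eq_mul, hstate.2]
    have hys_pos : 0 < φs s ys := by nlinarith
    have hzle : φs s z ≤ ‖z‖ := (abs_le.mp (hous.abs_state_le hstate z)).2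
    have hz0 : 0 ≤ φs s z := hstate.1 z hz
    have hdiv : ((1 - s) * φ z + s) / s ≤ φs s zs / φs s ys := by
      rw [← hM]; exact hMge
    rw [div_le_div_iff₀ hs0 hys_pos] at hdiv
    refine ⟨ha0, ?_⟩
    rw [hc, div_mul_eq_mul_div, le_div_iff₀ hφz]
    rw [haeval, hzseval] at hdiv
    have hPz : φ z / 2 ≤ (1 - s) * φ z + s := by nlinarith
    have hAz : φs s η / 2 ≤ (1 - s) * φs s η + s := by nlinarith
    have hprod : (φ z / 2) * (φs s η / 2) ≤ ((1 - s) * φ z + s) * ((1 - s) * φs s η + s) :=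
      mul_le_mul hPz hAz (by linarith) (by linarith)
    have hub : ((1 - s) * φs s z + s) * s ≤ (‖z‖ + 1) * s := by
      have h5 : (1 - s) * φs s z + s ≤ ‖z‖ + 1 := by nlinarith [mul_nonneg hs0.le hz0]
      exact mul_le_mul_of_nonneg_right h5 hs0.le
    nlinarith [hprod, hub, hdiv]
  -- part 1
  have hIoc : Set.Ioc (0:ℝ) (1/2 : ℝ) ∈ 𝓝[>] (0:ℝ) :=
    Ioc_mem_nhdsGT (by norm_num)
  have hIoc1 : Set.Ioc (0:ℝ) 1 ∈ 𝓝[>] (0:ℝ) := Ioc_mem_nhdsGT one_pos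
  have part1 : Tendsto (fun s : ℝ => φs s η) (𝓝[>] (0:ℝ)) (𝓝 0) := by
    have h2 : Tendsto (fun s : ℝ => c * s) (𝓝[>] (0:ℝ)) (𝓝 0) := by
      have : Tendsto (fun s : ℝ => c * s) (𝓝 0) (𝓝 (c * 0)) :=
        (continuous_const.mul continuous_id).tendsto (0 : ℝ)
      simpa using this.mono_left nhdsWithin_le_nhds
    refine tendsto_of_tendsto_of_tendsto_of_le_of_le' tendsto_const_nhds h2 ?_ ?_
    · filter_upwards [hIoc] with s hs using (hbound s hs).1
    · filter_upwards [hIoc] with s hs using (hbound s hs).2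
  refine ⟨part1, ?_⟩
  -- part 2
  obtain ⟨φ₀, hφ₀, huniq⟩ := hsm η hη hη0
  have hφeq : φ = φ₀ := huniq φ ⟨hφ, hφη⟩
  let g : ℝ → WeakDual ℝ V := fun s =>
    if hs : s ∈ Set.Ioc (0:ℝ) 1 then
      StrongDual.toWeakDual (hous.stateCLM (φs s) (hφs s hs).1)
    else StrongDual.toWeakDual (hous.stateCLM φ hφ)
  set Φ : WeakDual ℝ V := StrongDual.toWeakDual (hous.stateCLM φ hφ) with hΦ
  have hgapply : ∀ s ∈ Set.Ioc (0:ℝ) 1, ∀ v : V, g s v = φs s v := by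
    intro s hs v
    simp only [g, dif_pos hs]
    rfl
  set K0 : Set (WeakDual ℝ V) := WeakDual.toStrongDual ⁻¹' Metric.closedBall 0 1 with hK0
  have hK0cpt : IsCompact K0 := WeakDual.isCompact_closedBall 0 1
  have hgK0 : ∀ s : ℝ, g s ∈ K0 := by
    intro s
    simp only [g]
    split
    · simpa [hK0, mem_closedBall_zero_iff] using hous.stateCLM_norm_le (φs s) _
    · simpa [hK0, mem_closedBall_zero_iff] using hous.stateCLM_norm_le φ hφ
  have hgconv : Tendsto g (𝓝[>] (0:ℝ)) (𝓝 Φ) := by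
    rw [tendsto_iff_ultrafilter]
    intro U hU
    have hUIoc : Set.Ioc (0:ℝ) 1 ∈ U := hU hIoc1
    have hmapK : ↑(U.map g) ≤ 𝓟 K0 := by
      rw [Ultrafilter.coe_map, le_principal_iff, mem_map]
      exact univ_mem' hgK0
    obtain ⟨Ψ, hΨK, hΨle⟩ := hK0cpt.ultrafilter_le_nhds (U.map g) hmapK
    have hΨconv : Tendsto g ↑U (𝓝 Ψ) := by rwa [Ultrafilter.coe_map] at hΨle
    have heval : ∀ v : V, Tendsto (fun s => φs s v) ↑U (𝓝 (Ψ v)) := by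
      intro v
      have h1 : Tendsto (fun s => g s v) ↑U (𝓝 (Ψ v)) :=
        ((WeakDual.eval_continuous v).tendsto Ψ).comp hΨconv
      refine h1.congr' ?_
      filter_upwards [hUIoc] with s hs using hgapply s hs v
    set ψ : V →ₗ[ℝ] ℝ := (WeakDual.toStrongDual Ψ).toLinearMap with hψ
    have hψapply : ∀ v : V, ψ v = Ψ v := fun v => rfl
    have hψstate : IsState C u ψ := by
      constructor
      · intro x hx
        refine ge_of_tendsto (heval x) ?_
        filter_upwards [hUIoc] with s hs using (hφs s hs).1.1 x hx
      · refine tendsto_nhds_unique (heval u) ?_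
        refine Tendsto.congr' ?_ (tendsto_const_nhds : Tendsto (fun _ : ℝ => (1:ℝ)) ↑U (𝓝 1))
        filter_upwards [hUIoc] with s hs using ((hφs s hs).1.2).symm
    have hψη : ψ η = 0 := tendsto_nhds_unique (heval η) (part1.mono_left hU)
    have hψeq : ψ = φ₀ := huniq ψ ⟨hψstate, hψη⟩
    have hΨΦ : Ψ = Φ := by
      apply DFunLike.ext
      intro v
      have : ψ v = φ v := by rw [hψeq, hφeq]
      rw [← hψapply v] at *
      exact this
    rwa [hΨΦ] at hΨconv
  intro v
  have h1 : Tendsto (fun s => g s v) (𝓝[>] (0:ℝ)) (𝓝 (Φ v)) :=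
    ((WeakDual.eval_continuous v).tendsto Φ).comp hgconv
  have hΦv : Φ v = φ v := rfl
  rw [hΦv] at h1
  refine h1.congr' ?_
  filter_upwards [hIoc1] with s hs using hgapply s hs v
end
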